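/- Let w ∈ ℂ, r > 0, z ∈ ℂ. For every n ∈ ℕ, |S_{w,n+1}(z)| ≤ τ(w,z)ⁿ · (√(τ(w,z)² + (Im w)²) + |Im w|), where τ(w,z) = √|Δ_w(z)| and S_{w,2m}(z) = Δ_w(z)^m, S_{w,2m+1}(z) = Δ_w(z)^m (z−w). -/

import Mathlib

/-- The characteristic polynomial `Δ_w(z) = (z-w)(z-conj w)`. -/
noncomputable def Delta (w z : ℂ) : ℂ := (z - w) * (z - (starRingEnd ℂ) w)

/-- The Cassini pseudo-metric `τ(w,z) = √|Δ_w(z)|`. -/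
noncomputable def tau (w z : ℂ) : ℝ := Real.sqrt (‖Delta w z‖)

/-- The complex spherical polynomials: `S_{w,2m}(z) = Δ_w(z)^m`,
`S_{w,2m+1}(z) = Δ_w(z)^m (z−w)`. -/
noncomputable def Sph (w : ℂ) (n : ℕ) (z : ℂ) : ℂ :=
  Delta w z ^ (n / 2) * (if n % 2 = 1 then z - w else 1)

/-- Upper bound for the spherical polynomials:
`|S_{w,n+1}(z)| ≤ τ(w,z)ⁿ·(√(τ(w,z)² + (Im w)²) + |Im w|)`. -/
theorem sph_abs_le (w z : ℂ) (n : ℕ) :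
    ‖Sph w (n + 1) z‖
      ≤ tau w z ^ n * (Real.sqrt (tau w z ^ 2 + w.im ^ 2) + |w.im|) := by
  set t := tau w z with ht
  set a := ‖z - w‖ with ha
  set c := ‖z - (starRingEnd ℂ) w‖ with hc
  set b := |w.im| with hb
  have ht0 : 0 ≤ t := Real.sqrt_nonneg _
  have ha0 : 0 ≤ a := norm_nonneg _
  have hb0 : 0 ≤ b := abs_nonneg _
  have ht2 : t ^ 2 = a * c := by
    rw [ht, tau, Real.sq_sqrt (norm_nonneg _), Delta, norm_mul]
  have hb2 : b ^ 2 = w.im ^ 2 := sq_abs _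
  have hsqrtle : t ≤ Real.sqrt (t ^ 2 + w.im ^ 2) := by
    have h := Real.sqrt_le_sqrt (le_add_of_nonneg_right (sq_nonneg w.im) :
      t ^ 2 ≤ t ^ 2 + w.im ^ 2)
    rwa [Real.sqrt_sq ht0] at h
  have hC0 : 0 ≤ Real.sqrt (t ^ 2 + w.im ^ 2) + b := by positivity
  rcases Nat.even_or_odd n with ⟨m, hm⟩ | ⟨m, hm⟩
  · -- n = 2m, so n+1 is odd
    have h1 : (n + 1) / 2 = m := by omega
    have h2 : (n + 1) % 2 = 1 := by omega
    have hS : ‖Sph w (n + 1) z‖ = (a * c) ^ m * a := by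
      simp [Sph, h1, h2, map_mul, map_pow, Delta, ha, hc]
    -- key: c ≥ a - 2b
    have hwc : ‖w - (starRingEnd ℂ) w‖ = 2 * b := by
      rw [Complex.sub_conj]
      simp [Complex.norm_real, abs_mul, hb]
    have hkey : a - 2 * b ≤ c := by
      have h := norm_add_le (z - (starRingEnd ℂ) w) ((starRingEnd ℂ) w - w)
      have he : z - (starRingEnd ℂ) w + ((starRingEnd ℂ) w - w) = z - w := by ring
      have hwc' : ‖(starRingEnd ℂ) w - w‖ = 2 * b := by
        rw [← norm_neg, neg_sub, hwc]
      rw [he, hwc', ← ha, ← hc] at h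
      linarith
    -- a*(a-2b) ≤ t²
    have h3 : a * (a - 2 * b) ≤ t ^ 2 := by
      rw [ht2]; exact mul_le_mul_of_nonneg_left hkey ha0
    -- so a ≤ √(t²+b²)+b
    have h4 : a ≤ Real.sqrt (t ^ 2 + w.im ^ 2) + b := by
      have h5 : (a - b) ^ 2 ≤ t ^ 2 + w.im ^ 2 := by nlinarith [hb2]
      have h6 : a - b ≤ Real.sqrt (t ^ 2 + w.im ^ 2) := by
        calc a - b ≤ |a - b| := le_abs_self _
          _ = Real.sqrt ((a - b) ^ 2) := (Real.sqrt_sq_eq_abs _).symm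
          _ ≤ _ := Real.sqrt_le_sqrt h5
      linarith
    have htn : t ^ n = (a * c) ^ m := by
      rw [hm, ← two_mul, pow_mul, ht2]
    rw [hS, ← htn]
    exact mul_le_mul_of_nonneg_left h4 (by positivity)
  · -- n = 2m+1, so n+1 is even
    have h1 : (n + 1) / 2 = m + 1 := by omega
    have h2 : (n + 1) % 2 = 0 := by omega
    have hS : ‖Sph w (n + 1) z‖ = (a * c) ^ (m + 1) := by
      simp [Sph, h1, h2, map_mul, map_pow, Delta, ha, hc]
    have htn : (a * c) ^ (m + 1) = t ^ n * t := by
      rw [← ht2, hm]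
      ring
    rw [hS, htn]
    have : t ≤ Real.sqrt (t ^ 2 + w.im ^ 2) + b := by linarith
    exact mul_le_mul_of_nonneg_left this (by positivity)
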